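/- Let Q = (Q_{ij})_{i,j≥1} be a substochastic matrix on the positive integers satisfying the spectral hypothesis (with data ρ, u, v, ν, K, ε and S⁽ⁿ⁾ := Qⁿ − ρⁿ v uᵀ). For i ≥ 1 and n with (Qⁿ𝟙)_i > 0, and x = (x_1,…,x_n) ∈ {1,2,…}^n (x_0 := i), define p_i^{(n,n)}(x) := (Π_{u=1}^{n} Q_{x_{u-1}x_u}) / (Qⁿ𝟙)_i and p_i^{(n,↑)}(x) := ρ^{−n} v_i^{−1} (Π_{u=1}^{n} Q_{x_{u-1}x_u}) v_{x_n}, and set d_n^{(n)}(i) := (1/2) Σ_{x ∈ {1,2,…}^n} | p_i^{(n,n)}(x) − p_i^{(n,↑)}(x) |. Then for every i ≥ 1, lim_{n→∞} d_n^{(n)}(i) = (1/2) Σ_{j=1}^{∞} u_j |1 − v_j|. -/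

import Mathlib

open Filter Topology

/-- `n`-th power of an infinite matrix indexed by the positive integers. -/
noncomputable def matpow (Q : ℕ+ → ℕ+ → ℝ) : ℕ → ℕ+ → ℕ+ → ℝ
  | 0 => fun i j => if i = j then 1 else 0
  | n + 1 => fun i j => ∑' k : ℕ+, matpow Q n i k * Q k j

/-- `(Qⁿ𝟙)ᵢ`. -/
noncomputable def rowSum (Q : ℕ+ → ℕ+ → ℝ) (n : ℕ) (i : ℕ+) : ℝ :=
  ∑' j : ℕ+, matpow Q n i j

/-- The product `Q_{x₀x₁}Q_{x₁x₂}⋯Q_{x_{ℓ-1}x_ℓ}` along a path `x : Fin ℓ → ℕ+`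
started at `x₀ = i`. -/
noncomputable def pathProd (Q : ℕ+ → ℕ+ → ℝ) (i : ℕ+) {ℓ : ℕ} (x : Fin ℓ → ℕ+) : ℝ :=
  ∏ u : Fin ℓ,
    Q (if h : u.val = 0 then i else x ⟨u.val - 1, lt_of_le_of_lt (Nat.sub_le _ _) u.isLt⟩) (x u)

/-- The final state `x_ℓ` of a path (equal to `i` when `ℓ = 0`). -/
def lastState (i : ℕ+) {ℓ : ℕ} (x : Fin ℓ → ℕ+) : ℕ+ :=
  if h : ℓ = 0 then i else x ⟨ℓ - 1, by omega⟩

/-- `p_i^{(ℓ,n)}(x)`: the law of the first `ℓ` steps of the chain started at `i`,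
conditioned on survival up to time `n`. -/
noncomputable def condPathLaw (Q : ℕ+ → ℕ+ → ℝ) (i : ℕ+) (n : ℕ) {ℓ : ℕ}
    (x : Fin ℓ → ℕ+) : ℝ :=
  pathProd Q i x * rowSum Q (n - ℓ) (lastState i x) / rowSum Q n i

/-- `p_i^{(ℓ,↑)}(x)`: the law of the first `ℓ` steps of the `Q`-process started at `i`. -/
noncomputable def qPathLaw (Q : ℕ+ → ℕ+ → ℝ) (ρ : ℝ) (v : ℕ+ → ℝ) (i : ℕ+) {ℓ : ℕ}
    (x : Fin ℓ → ℕ+) : ℝ :=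
  (ρ ^ ℓ)⁻¹ * (v i)⁻¹ * (pathProd Q i x * v (lastState i x))

/-- `d_ℓ^{(n)}(i)`: total variation distance between the two path laws. -/
noncomputable def tvDist (Q : ℕ+ → ℕ+ → ℝ) (ρ : ℝ) (v : ℕ+ → ℝ) (i : ℕ+) (ℓ n : ℕ) : ℝ :=
  (1 / 2) * ∑' x : Fin ℓ → ℕ+, |condPathLaw Q i n x - qPathLaw Q ρ v i x|

/-- `(S⁽ⁿ⁾𝟙)ᵢ` where `S⁽ⁿ⁾ = Qⁿ - ρⁿ v uᵀ`. -/
noncomputable def Sone (Q : ℕ+ → ℕ+ → ℝ) (ρ : ℝ) (v u : ℕ+ → ℝ) (n : ℕ) (i : ℕ+) : ℝ :=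
  ∑' j : ℕ+, (matpow Q n i j - ρ ^ n * v i * u j)

/-! ### Auxiliary material -/

open ENNReal in
/-- `ℝ≥0∞`-valued version of `matpow`. -/
noncomputable def eM (Q : ℕ+ → ℕ+ → ℝ) : ℕ → ℕ+ → ℕ+ → ℝ≥0∞
  | 0 => fun i j => if i = j then 1 else 0
  | n + 1 => fun i j => ∑' k : ℕ+, eM Q n i k * ENNReal.ofReal (Q k j)

section AuxLemmas

open ENNReal

variable {Q : ℕ+ → ℕ+ → ℝ} (hn : ∀ i j, 0 ≤ Q i j) (hs : ∀ i, Summable (Q i))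
  (hr : ∀ i, ∑' j, Q i j ≤ 1)

include hn hs hr in
lemma Q_le_one (k j : ℕ+) : Q k j ≤ 1 :=
  le_trans (Summable.le_tsum (hs k) j fun _ _ => hn _ _) (hr k)

include hn hs hr in
lemma eM_row_le_one : ∀ n i, ∑' j, eM Q n i j ≤ 1 := by
  intro n
  induction n with
  | zero =>
    intro i
    have : ∑' j : ℕ+, eM Q 0 i j = 1 := by
      rw [show eM Q 0 i = fun j => if i = j then (1:ℝ≥0∞) else 0 from rfl]
      rw [tsum_eq_single i (fun j hj => if_neg (fun h => hj h.symm))]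
      simp
    simp [this]
  | succ n ih =>
    intro i
    have : ∑' j : ℕ+, eM Q (n+1) i j
        = ∑' k : ℕ+, eM Q n i k * ∑' j : ℕ+, ENNReal.ofReal (Q k j) := by
      rw [show eM Q (n+1) i = fun j => ∑' k : ℕ+, eM Q n i k * ENNReal.ofReal (Q k j) from rfl]
      rw [ENNReal.tsum_comm]
      exact tsum_congr fun k => ENNReal.tsum_mul_left
    rw [this]
    have hQrow : ∀ k : ℕ+, ∑' j : ℕ+, ENNReal.ofReal (Q k j) ≤ 1 := by
      intro k
      rw [← ENNReal.ofReal_tsum_of_nonneg (hn k) (hs k), ← ENNReal.ofReal_one]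
      exact ENNReal.ofReal_le_ofReal (hr k)
    calc ∑' k : ℕ+, eM Q n i k * ∑' j : ℕ+, ENNReal.ofReal (Q k j)
        ≤ ∑' k : ℕ+, eM Q n i k * 1 := ENNReal.tsum_le_tsum fun k => mul_le_mul_right (hQrow k) _
      _ = ∑' k : ℕ+, eM Q n i k := by simp
      _ ≤ 1 := ih i

include hn hs hr in
lemma matpow_facts : ∀ n, (∀ i j, 0 ≤ matpow Q n i j) ∧
    (∀ i j, eM Q n i j = ENNReal.ofReal (matpow Q n i j)) := by
  intro n
  induction n with
  | zero =>
    refine ⟨fun i j => ?_, fun i j => ?_⟩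
    · show (0:ℝ) ≤ if i = j then 1 else 0
      split <;> norm_num
    · show (if i = j then (1:ℝ≥0∞) else 0) = ENNReal.ofReal (if i = j then 1 else 0)
      split <;> simp
  | succ n ih =>
    obtain ⟨h0, h1⟩ := ih
    have hrowfin : ∀ i : ℕ+, ∑' j : ℕ+, ENNReal.ofReal (matpow Q n i j) ≤ 1 := by
      intro i
      have := eM_row_le_one hn hs hr n i
      rwa [tsum_congr (fun j => h1 i j)] at this
    have hsumm : ∀ i : ℕ+, Summable (fun j => matpow Q n i j) := by
      intro i
      have h := ENNReal.summable_toReal (f := fun j : ℕ+ => ENNReal.ofReal (matpow Q n i j))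
        (ne_top_of_le_ne_top one_ne_top (hrowfin i))
      exact h.congr fun j => ENNReal.toReal_ofReal (h0 i j)
    have hks : ∀ i j : ℕ+, Summable (fun k => matpow Q n i k * Q k j) := by
      intro i j
      refine (hsumm i).of_nonneg_of_le (fun k => mul_nonneg (h0 i k) (hn k j)) (fun k => ?_)
      exact mul_le_of_le_one_right (h0 i k) (Q_le_one hn hs hr k j)
    refine ⟨fun i j => ?_, fun i j => ?_⟩
    · exact tsum_nonneg fun k => mul_nonneg (h0 i k) (hn k j)
    · show (∑' k : ℕ+, eM Q n i k * ENNReal.ofReal (Q k j))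
        = ENNReal.ofReal (∑' k : ℕ+, matpow Q n i k * Q k j)
      rw [ENNReal.ofReal_tsum_of_nonneg (fun k => mul_nonneg (h0 i k) (hn k j)) (hks i j)]
      exact tsum_congr fun k => by rw [h1, ENNReal.ofReal_mul (h0 i k)]

include hn hs hr in
lemma matpow_nonneg (n : ℕ) (i j : ℕ+) : 0 ≤ matpow Q n i j :=
  (matpow_facts hn hs hr n).1 i j

include hn hs hr in
lemma eM_eq (n : ℕ) (i j : ℕ+) : eM Q n i j = ENNReal.ofReal (matpow Q n i j) :=
  (matpow_facts hn hs hr n).2 i j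

include hn hs hr in
lemma matpow_summable (n : ℕ) (i : ℕ+) : Summable (fun j => matpow Q n i j) := by
  have hrowfin : ∑' j : ℕ+, ENNReal.ofReal (matpow Q n i j) ≤ 1 := by
    have := eM_row_le_one hn hs hr n i
    rwa [tsum_congr (fun j => eM_eq hn hs hr n i j)] at this
  have h := ENNReal.summable_toReal (f := fun j : ℕ+ => ENNReal.ofReal (matpow Q n i j))
    (ne_top_of_le_ne_top one_ne_top hrowfin)
  exact h.congr fun j => ENNReal.toReal_ofReal (matpow_nonneg hn hs hr n i j)

include hn in
lemma eM_eigen {ρ : ℝ} (hρ : 0 < ρ) {v : ℕ+ → ℝ} (hv_pos : ∀ j, 0 < v j)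
    (hv_eig : ∀ i, HasSum (fun j : ℕ+ => Q i j * v j) (ρ * v i)) (i : ℕ+) :
    ∀ n : ℕ, ∑' j : ℕ+, eM Q n i j * ENNReal.ofReal (v j) = ENNReal.ofReal (ρ ^ n * v i) := by
  intro n
  induction n with
  | zero =>
    rw [tsum_eq_single i (fun j hj => by
      show (if i = j then (1:ℝ≥0∞) else 0) * _ = 0
      rw [if_neg (fun h => hj h.symm), zero_mul])]
    show (if i = i then (1:ℝ≥0∞) else 0) * ENNReal.ofReal (v i) = _
    simp
  | succ n ih =>
    have hstep : ∀ k : ℕ+, ∑' j : ℕ+, ENNReal.ofReal (Q k j) * ENNReal.ofReal (v j)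
        = ENNReal.ofReal (ρ * v k) := by
      intro k
      rw [tsum_congr (fun j => (ENNReal.ofReal_mul (hn k j)).symm),
        ← ENNReal.ofReal_tsum_of_nonneg (fun j => mul_nonneg (hn k j) (hv_pos j).le)
          (hv_eig k).summable, (hv_eig k).tsum_eq]
    calc ∑' j : ℕ+, eM Q (n+1) i j * ENNReal.ofReal (v j)
        = ∑' j : ℕ+, ∑' k : ℕ+, eM Q n i k * ENNReal.ofReal (Q k j) * ENNReal.ofReal (v j) := by
          refine tsum_congr fun j => ?_
          rw [show eM Q (n+1) i j = ∑' k : ℕ+, eM Q n i k * ENNReal.ofReal (Q k j) from rfl,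
            ENNReal.tsum_mul_right]
      _ = ∑' k : ℕ+, ∑' j : ℕ+, eM Q n i k * (ENNReal.ofReal (Q k j) * ENNReal.ofReal (v j)) := by
          rw [ENNReal.tsum_comm]
          exact tsum_congr fun k => tsum_congr fun j => by rw [mul_assoc]
      _ = ∑' k : ℕ+, eM Q n i k * ENNReal.ofReal (ρ * v k) := by
          refine tsum_congr fun k => ?_
          rw [ENNReal.tsum_mul_left, hstep k]
      _ = ENNReal.ofReal ρ * ∑' k : ℕ+, eM Q n i k * ENNReal.ofReal (v k) := by
          rw [← ENNReal.tsum_mul_left]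
          exact tsum_congr fun k => by
            rw [ENNReal.ofReal_mul hρ.le]; ring
      _ = ENNReal.ofReal (ρ ^ (n+1) * v i) := by
          rw [ih, ← ENNReal.ofReal_mul hρ.le]
          ring_nf

lemma lastState_snoc (i j : ℕ+) {n : ℕ} (y : Fin n → ℕ+) :
    lastState i (Fin.snoc y j : Fin (n+1) → ℕ+) = j := by
  have : (⟨n, by omega⟩ : Fin (n+1)) = Fin.last n := rfl
  simp [lastState, this, Fin.snoc_last]

include hn in
lemma pathProd_nonneg (i : ℕ+) {ℓ : ℕ} (x : Fin ℓ → ℕ+) : 0 ≤ pathProd Q i x :=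
  Finset.prod_nonneg fun _ _ => hn _ _

lemma pathProd_empty (Q : ℕ+ → ℕ+ → ℝ) (i : ℕ+) (x : Fin 0 → ℕ+) : pathProd Q i x = 1 := by
  simp [pathProd]

lemma lastState_empty (i : ℕ+) (x : Fin 0 → ℕ+) : lastState i x = i := by simp [lastState]

lemma pathProd_snoc (Q : ℕ+ → ℕ+ → ℝ) (i j : ℕ+) {n : ℕ} (y : Fin n → ℕ+) :
    pathProd Q i (Fin.snoc y j : Fin (n+1) → ℕ+) = pathProd Q i y * Q (lastState i y) j := by
  unfold pathProd
  rw [Fin.prod_univ_castSucc]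
  congr 1
  · refine Finset.prod_congr rfl fun t _ => ?_
    have h1 : (Fin.snoc y j : Fin (n+1) → ℕ+) t.castSucc = y t := Fin.snoc_castSucc _ _ _
    simp only [Fin.coe_castSucc]
    by_cases ht : t.val = 0
    · rw [h1]; rw [dif_pos ht, dif_pos ht]
    · rw [h1, dif_neg ht, dif_neg ht]
      congr 1
      have hlt : t.val - 1 < n := lt_of_le_of_lt (Nat.sub_le _ _) t.isLt
      have : (⟨t.val - 1, lt_of_le_of_lt (Nat.sub_le _ _) t.castSucc.isLt⟩ : Fin (n+1))
          = Fin.castSucc ⟨t.val - 1, hlt⟩ := rfl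
      rw [this, Fin.snoc_castSucc]
  · have hlast : (Fin.snoc y j : Fin (n+1) → ℕ+) (Fin.last n) = j := Fin.snoc_last _ _
    rw [hlast]
    congr 1
    by_cases hn0 : n = 0
    · subst hn0
      simp [lastState]
    · simp only [Fin.val_last]
      rw [dif_neg hn0]
      have hlt : n - 1 < n := by omega
      have : (⟨n - 1, lt_of_le_of_lt (Nat.sub_le _ _) (Fin.last n).isLt⟩ : Fin (n+1))
          = Fin.castSucc ⟨n - 1, hlt⟩ := rfl
      rw [this, Fin.snoc_castSucc]
      simp [lastState, hn0]

include hn in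
lemma tsum_path (i : ℕ+) :
    ∀ (n : ℕ) (g : ℕ+ → ℝ≥0∞),
      ∑' x : Fin n → ℕ+, ENNReal.ofReal (pathProd Q i x) * g (lastState i x)
        = ∑' j : ℕ+, eM Q n i j * g j := by
  intro n
  induction n with
  | zero =>
    intro g
    rw [tsum_eq_single (fun t : Fin 0 => (1:ℕ+)) (fun b hb => absurd (Subsingleton.elim b _) hb)]
    rw [tsum_eq_single i (fun j hj => by
      show (if i = j then (1:ℝ≥0∞) else 0) * g j = 0
      rw [if_neg (fun h => hj h.symm), zero_mul])]
    rw [pathProd_empty, lastState_empty]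
    show ENNReal.ofReal 1 * g i = (if i = i then (1:ℝ≥0∞) else 0) * g i
    simp
  | succ n ih =>
    intro g
    have he := Equiv.tsum_eq (Fin.snocEquiv (fun _ : Fin (n+1) => ℕ+))
      (fun x : Fin (n+1) → ℕ+ => ENNReal.ofReal (pathProd Q i x) * g (lastState i x))
    rw [← he]
    have hfun : ∀ p : ℕ+ × (Fin n → ℕ+),
        ENNReal.ofReal (pathProd Q i (Fin.snocEquiv (fun _ => ℕ+) p))
          * g (lastState i (Fin.snocEquiv (fun _ => ℕ+) p))
        = ENNReal.ofReal (pathProd Q i p.2) *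
            (ENNReal.ofReal (Q (lastState i p.2) p.1) * g p.1) := by
      rintro ⟨j, y⟩
      have hsnoc : (Fin.snocEquiv (fun _ : Fin (n+1) => ℕ+) (j, y)) = Fin.snoc y j := rfl
      rw [hsnoc, pathProd_snoc, lastState_snoc,
        ENNReal.ofReal_mul (pathProd_nonneg hn i y), mul_assoc]
    rw [tsum_congr hfun, ENNReal.tsum_prod']
    rw [ENNReal.tsum_comm]
    have hinner : ∀ y : Fin n → ℕ+,
        (∑' j : ℕ+, ENNReal.ofReal (pathProd Q i y) *
          (ENNReal.ofReal (Q (lastState i y) j) * g j))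
        = ENNReal.ofReal (pathProd Q i y) *
            (∑' j : ℕ+, ENNReal.ofReal (Q (lastState i y) j) * g j) :=
      fun y => ENNReal.tsum_mul_left
    rw [tsum_congr hinner, ih (fun k => ∑' j : ℕ+, ENNReal.ofReal (Q k j) * g j)]
    rw [tsum_congr (fun k => (ENNReal.tsum_mul_left (a := eM Q n i k)
      (f := fun j => ENNReal.ofReal (Q k j) * g j)).symm)]
    rw [ENNReal.tsum_comm]
    refine tsum_congr fun j => ?_
    show (∑' k : ℕ+, eM Q n i k * (ENNReal.ofReal (Q k j) * g j)) = eM Q (n+1) i j * g j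
    rw [show eM Q (n+1) i j = ∑' k : ℕ+, eM Q n i k * ENNReal.ofReal (Q k j) from rfl,
      ← ENNReal.tsum_mul_right]
    exact tsum_congr fun k => by rw [mul_assoc]

lemma rowSum_zero (Q : ℕ+ → ℕ+ → ℝ) (j : ℕ+) : rowSum Q 0 j = 1 := by
  unfold rowSum
  rw [tsum_eq_single j (fun k hk => by
    show (if j = k then (1:ℝ) else 0) = 0
    rw [if_neg (fun h => hk h.symm)])]
  show (if j = j then (1:ℝ) else 0) = 1
  simp

end AuxLemmas

lemma abs_eq_two_max (x : ℝ) : |x| = 2 * max x 0 - x := by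
  rcases le_or_gt 0 x with h | h
  · rw [abs_of_nonneg h, max_eq_left h]; ring
  · rw [abs_of_neg h, max_eq_right h.le]; ring

lemma scheffe {f : ℕ → ℕ+ → ℝ} {g : ℕ+ → ℝ}
    (hg_sum : HasSum g 1) (hg_nonneg : ∀ j, 0 ≤ g j)
    (hf_sum : ∀ᶠ n in atTop, HasSum (f n) 1)
    (hf_nonneg : ∀ᶠ n in atTop, ∀ j, 0 ≤ f n j)
    (hf_pt : ∀ j, Tendsto (f · j) atTop (𝓝 (g j))) :
    Tendsto (fun n => ∑' j : ℕ+, |f n j - g j|) atTop (𝓝 0) := by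
  have hmax : Tendsto (fun n => ∑' j : ℕ+, max (g j - f n j) 0) atTop
      (𝓝 (∑' j : ℕ+, max (g j - g j) 0)) := by
    refine tendsto_tsum_of_dominated_convergence hg_sum.summable (fun j => ?_) ?_
    · have : Tendsto (fun n => g j - f n j) atTop (𝓝 (g j - g j)) :=
        tendsto_const_nhds.sub (hf_pt j)
      simpa using this.max (tendsto_const_nhds (x := (0:ℝ)))
    · filter_upwards [hf_nonneg] with n hfn j
      rw [Real.norm_eq_abs, abs_of_nonneg (le_max_right _ _)]
      exact max_le (by linarith [hfn j, le_refl (g j)]) (hg_nonneg j)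
  have heq : ∀ᶠ n in atTop, ∑' j : ℕ+, |f n j - g j|
      = 2 * ∑' j : ℕ+, max (g j - f n j) 0 := by
    filter_upwards [hf_sum] with n hfs
    have hs_a : Summable (fun j => g j - f n j) := hg_sum.summable.sub hfs.summable
    have hsum_a : ∑' j : ℕ+, (g j - f n j) = 0 := by
      rw [Summable.tsum_sub hg_sum.summable hfs.summable, hg_sum.tsum_eq, hfs.tsum_eq, sub_self]
    have hs_max : Summable (fun j => max (g j - f n j) 0) :=
      hs_a.abs.of_nonneg_of_le (fun j => le_max_right _ _)
        (fun j => max_le (le_abs_self _) (abs_nonneg _))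
    calc ∑' j : ℕ+, |f n j - g j|
        = ∑' j : ℕ+, (2 * max (g j - f n j) 0 - (g j - f n j)) := by
          refine tsum_congr fun j => ?_
          rw [← abs_eq_two_max, abs_sub_comm]
      _ = 2 * ∑' j : ℕ+, max (g j - f n j) 0 := by
          rw [Summable.tsum_sub (hs_max.mul_left 2) hs_a, tsum_mul_left, hsum_a, sub_zero]
  simp only [sub_self, max_self, tsum_zero] at hmax
  have h2 : Tendsto (fun n => 2 * ∑' j : ℕ+, max (g j - f n j) 0) atTop (𝓝 (2 * 0)) :=
    hmax.const_mul 2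
  rw [mul_zero] at h2
  exact Tendsto.congr' (heq.mono fun n h => h.symm) h2

set_option maxHeartbeats 2000000 in
/-- Under the spectral hypothesis,
`d_n^{(n)}(i) → (1/2) ∑_j u_j |1 - v_j|` as `n → ∞`. -/
theorem tvDist_full_horizon_tendsto
    (Q : ℕ+ → ℕ+ → ℝ)
    (hQ_nonneg : ∀ i j, 0 ≤ Q i j)
    (hQ_summ : ∀ i, Summable (fun j => Q i j))
    (hQ_row : ∀ i, ∑' j, Q i j ≤ 1)
    (ρ : ℝ) (hρ : ρ ∈ Set.Ioo (0 : ℝ) 1)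
    (u v : ℕ+ → ℝ) (hu_pos : ∀ j, 0 < u j) (hv_pos : ∀ j, 0 < v j)
    (hu_eig : ∀ j, HasSum (fun i : ℕ+ => u i * Q i j) (ρ * u j))
    (hv_eig : ∀ i, HasSum (fun j : ℕ+ => Q i j * v j) (ρ * v i))
    (hu_sum : HasSum u 1) (huv_sum : HasSum (fun j => u j * v j) 1)
    (ν : ℕ) (hν : 1 ≤ ν)
    (hu_mom : Summable (fun j : ℕ+ => (j : ℝ) ^ ν * u j))
    (hv_bdd : ∃ M : ℝ, ∀ j : ℕ+, v j / (j : ℝ) ^ ν ≤ M)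
    (K ε : ℝ) (hε : ε ∈ Set.Ioo (0 : ℝ) 1)
    (hS_entry : ∀ n, 1 ≤ n → ∀ i j : ℕ+,
      |matpow Q n i j - ρ ^ n * v i * u j| ≤ ((i : ℝ) ^ ν / (j : ℝ) ^ ν) * K * (1 - ε) ^ n * ρ ^ n)
    (hS_row : ∀ n, 1 ≤ n → ∀ i : ℕ+,
      |Sone Q ρ v u n i| ≤ (i : ℝ) ^ ν * K * (1 - ε) ^ n * ρ ^ n) :
    ∀ i : ℕ+,
      Tendsto (fun n : ℕ => tvDist Q ρ v i n n) atTop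
        (𝓝 ((1 / 2) * ∑' j : ℕ+, u j * |1 - v j|)) := by
  intro i
  obtain ⟨hρ0, hρ1⟩ := hρ
  obtain ⟨hε0, hε1⟩ := hε
  have hρn : ∀ n : ℕ, (0:ℝ) < ρ ^ n := fun n => pow_pos hρ0 n
  have hvi : (0:ℝ) < v i := hv_pos i
  have hw : ∀ n : ℕ, (0:ℝ) < ρ ^ n * v i := fun n => mul_pos (hρn n) hvi
  have hMnn : ∀ n (a b : ℕ+), 0 ≤ matpow Q n a b := fun n a b =>
    matpow_nonneg hQ_nonneg hQ_summ hQ_row n a b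
  have hMsum : ∀ n, Summable (fun j => matpow Q n i j) := fun n =>
    matpow_summable hQ_nonneg hQ_summ hQ_row n i
  -- eigenvalue identity in the reals
  have hVsum : ∀ n, HasSum (fun j : ℕ+ => matpow Q n i j * v j) (ρ ^ n * v i) := by
    intro n
    have hE := eM_eigen hQ_nonneg hρ0 hv_pos hv_eig i n
    have hE' : ∑' j : ℕ+, ENNReal.ofReal (matpow Q n i j * v j)
        = ENNReal.ofReal (ρ ^ n * v i) := by
      rw [← hE]
      exact tsum_congr fun j => by
        rw [eM_eq hQ_nonneg hQ_summ hQ_row n i j, ENNReal.ofReal_mul (hMnn n i j)]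
    have hnonneg : ∀ j : ℕ+, 0 ≤ matpow Q n i j * v j := fun j =>
      mul_nonneg (hMnn n i j) (hv_pos j).le
    have hsummable : Summable (fun j : ℕ+ => matpow Q n i j * v j) := by
      have h := ENNReal.summable_toReal (f := fun j : ℕ+ => ENNReal.ofReal (matpow Q n i j * v j))
        (by rw [hE']; exact ENNReal.ofReal_ne_top)
      exact h.congr fun j => ENNReal.toReal_ofReal (hnonneg j)
    have htsum : ∑' j : ℕ+, matpow Q n i j * v j = ρ ^ n * v i := by
      have := hE'
      rw [← ENNReal.ofReal_tsum_of_nonneg hnonneg hsummable] at this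
      exact (ENNReal.ofReal_eq_ofReal_iff (tsum_nonneg hnonneg) (hw n).le).mp this
    exact htsum ▸ hsummable.hasSum
  -- Sone in terms of rowSum
  have hSone : ∀ n, Sone Q ρ v u n i = rowSum Q n i - ρ ^ n * v i := by
    intro n
    have hsub : Summable (fun j : ℕ+ => ρ ^ n * v i * u j) := hu_sum.summable.mul_left _
    unfold Sone rowSum
    rw [Summable.tsum_sub (hMsum n) hsub, tsum_mul_left, hu_sum.tsum_eq, mul_one]
  -- Sone/ρⁿ → 0
  have hpow : Tendsto (fun n : ℕ => (i:ℝ) ^ ν * K * (1 - ε) ^ n) atTop (𝓝 0) := by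
    have h := tendsto_pow_atTop_nhds_zero_of_lt_one (by linarith : (0:ℝ) ≤ 1 - ε)
      (by linarith : (1:ℝ) - ε < 1)
    simpa using h.const_mul ((i:ℝ) ^ ν * K)
  have hSdiv : Tendsto (fun n => Sone Q ρ v u n i / ρ ^ n) atTop (𝓝 0) := by
    refine squeeze_zero_norm' ?_ hpow
    filter_upwards [eventually_ge_atTop 1] with n hn1
    rw [Real.norm_eq_abs, abs_div, abs_of_pos (hρn n), div_le_iff₀ (hρn n)]
    calc |Sone Q ρ v u n i| ≤ (i:ℝ) ^ ν * K * (1 - ε) ^ n * ρ ^ n := hS_row n hn1 i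
      _ = (i:ℝ) ^ ν * K * (1 - ε) ^ n * ρ ^ n := rfl
  -- rowSum/ρⁿ → v i
  have hrdiv : Tendsto (fun n => rowSum Q n i / ρ ^ n) atTop (𝓝 (v i)) := by
    have : ∀ n, rowSum Q n i / ρ ^ n = v i + Sone Q ρ v u n i / ρ ^ n := by
      intro n
      rw [hSone n]
      field_simp
      ring
    rw [show (v i) = v i + 0 by ring]
    exact Tendsto.congr (fun n => (this n).symm) (tendsto_const_nhds.add hSdiv)
  have hr_pos : ∀ᶠ n in atTop, 0 < rowSum Q n i := by
    filter_upwards [hrdiv.eventually (eventually_gt_nhds hvi)] with n hn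
    have := mul_pos hn (hρn n)
    rwa [div_mul_cancel₀ _ (hρn n).ne'] at this
  -- pointwise convergence of matpow/ρⁿ
  have hMdiv : ∀ j : ℕ+, Tendsto (fun n => matpow Q n i j / ρ ^ n) atTop (𝓝 (v i * u j)) := by
    intro j
    have hj : Tendsto (fun n : ℕ => ((i:ℝ) ^ ν / (j:ℝ) ^ ν) * K * (1 - ε) ^ n) atTop (𝓝 0) := by
      have h := tendsto_pow_atTop_nhds_zero_of_lt_one (by linarith : (0:ℝ) ≤ 1 - ε)
        (by linarith : (1:ℝ) - ε < 1)
      simpa using h.const_mul (((i:ℝ) ^ ν / (j:ℝ) ^ ν) * K)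
    have hz : Tendsto (fun n => matpow Q n i j / ρ ^ n - v i * u j) atTop (𝓝 0) := by
      refine squeeze_zero_norm' ?_ hj
      filter_upwards [eventually_ge_atTop 1] with n hn1
      rw [Real.norm_eq_abs]
      have : matpow Q n i j / ρ ^ n - v i * u j
          = (matpow Q n i j - ρ ^ n * v i * u j) / ρ ^ n := by
        field_simp
      rw [this, abs_div, abs_of_pos (hρn n), div_le_iff₀ (hρn n)]
      exact hS_entry n hn1 i j
    have := hz.add (tendsto_const_nhds (x := v i * u j))
    simpa using this
  -- the two probability vectors
  set p : ℕ → ℕ+ → ℝ := fun n j => matpow Q n i j / rowSum Q n i with hp_def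
  set q : ℕ → ℕ+ → ℝ := fun n j => matpow Q n i j * v j / (ρ ^ n * v i) with hq_def
  have hp_pt : ∀ j, Tendsto (p · j) atTop (𝓝 (u j)) := by
    intro j
    have h := (hMdiv j).div hrdiv hvi.ne'
    have heq : ∀ n, matpow Q n i j / ρ ^ n / (rowSum Q n i / ρ ^ n) = p n j := fun n =>
      div_div_div_cancel_right₀ (hρn n).ne' _ _
    have hlim : v i * u j / v i = u j := by field_simp
    rw [hlim] at h
    exact h.congr heq
  have hq_pt : ∀ j, Tendsto (q · j) atTop (𝓝 (u j * v j)) := by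
    intro j
    have h := (hMdiv j).mul_const (v j / v i)
    have heq : ∀ n, matpow Q n i j / ρ ^ n * (v j / v i) = q n j := fun n => by
      rw [div_mul_div_comm]
    have hlim : v i * u j * (v j / v i) = u j * v j := by field_simp
    rw [hlim] at h
    exact h.congr heq
  have hp_sum : ∀ᶠ n in atTop, HasSum (p n) 1 := by
    filter_upwards [hr_pos] with n hrn
    have := (hMsum n).hasSum.div_const (rowSum Q n i)
    rwa [show (∑' j : ℕ+, matpow Q n i j) = rowSum Q n i from rfl, div_self hrn.ne'] at this
  have hp_nonneg : ∀ᶠ n in atTop, ∀ j, 0 ≤ p n j := by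
    filter_upwards [hr_pos] with n hrn j
    exact div_nonneg (hMnn n i j) hrn.le
  have hq_sum : ∀ n, HasSum (q n) 1 := by
    intro n
    have := (hVsum n).div_const (ρ ^ n * v i)
    rwa [div_self (hw n).ne'] at this
  have hq_nonneg : ∀ n j, 0 ≤ q n j := fun n j =>
    div_nonneg (mul_nonneg (hMnn n i j) (hv_pos j).le) (hw n).le
  -- Scheffé
  have ha : Tendsto (fun n => ∑' j : ℕ+, |p n j - u j|) atTop (𝓝 0) :=
    scheffe hu_sum (fun j => (hu_pos j).le) hp_sum hp_nonneg hp_pt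
  have hb : Tendsto (fun n => ∑' j : ℕ+, |q n j - u j * v j|) atTop (𝓝 0) :=
    scheffe huv_sum (fun j => mul_nonneg (hu_pos j).le (hv_pos j).le)
      (Eventually.of_forall hq_sum) (Eventually.of_forall fun n => hq_nonneg n) hq_pt
  -- target sum
  have hD_eq : ∑' j : ℕ+, u j * |1 - v j| = ∑' j : ℕ+, |u j - u j * v j| :=
    tsum_congr fun j => by
      rw [show u j - u j * v j = u j * (1 - v j) by ring, abs_mul,
        abs_of_nonneg (hu_pos j).le]
  have hD_summ : Summable (fun j : ℕ+ => |u j - u j * v j|) :=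
    (hu_sum.summable.sub huv_sum.summable).abs
  -- convergence of X n := ∑' |p n - q n|
  have hX : Tendsto (fun n => ∑' j : ℕ+, |p n j - q n j|) atTop
      (𝓝 (∑' j : ℕ+, |u j - u j * v j|)) := by
    have hzero : Tendsto (fun n => (∑' j : ℕ+, |p n j - q n j|)
        - ∑' j : ℕ+, |u j - u j * v j|) atTop (𝓝 0) := by
      refine squeeze_zero_norm' ?_ (by simpa using ha.add hb)
      filter_upwards [hp_sum] with n hpn
      have hpu : Summable (fun j => p n j - u j) := hpn.summable.sub hu_sum.summable
      have hqv : Summable (fun j => q n j - u j * v j) :=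
        (hq_sum n).summable.sub huv_sum.summable
      have hpq : Summable (fun j : ℕ+ => |p n j - q n j|) :=
        (hpn.summable.sub (hq_sum n).summable).abs
      rw [Real.norm_eq_abs, ← Summable.tsum_sub hpq hD_summ]
      calc |∑' j : ℕ+, (|p n j - q n j| - |u j - u j * v j|)|
          ≤ ∑' j : ℕ+, |(|p n j - q n j| - |u j - u j * v j|)| := by
            have hsummm : Summable (fun j : ℕ+ => |(|p n j - q n j| - |u j - u j * v j|)|) :=
              (hpq.sub hD_summ).abs
            simpa [Real.norm_eq_abs] using norm_tsum_le_tsum_norm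
              (f := fun j : ℕ+ => |p n j - q n j| - |u j - u j * v j|)
              (by simpa [Real.norm_eq_abs] using hsummm)
        _ ≤ ∑' j : ℕ+, (|p n j - u j| + |q n j - u j * v j|) := by
            refine Summable.tsum_le_tsum (fun j => ?_) ((hpq.sub hD_summ).abs) (hpu.abs.add hqv.abs)
            calc |(|p n j - q n j| - |u j - u j * v j|)|
                ≤ |(p n j - q n j) - (u j - u j * v j)| := abs_abs_sub_abs_le_abs_sub _ _
              _ = |(p n j - u j) - (q n j - u j * v j)| := by ring_nf
              _ ≤ |p n j - u j| + |q n j - u j * v j| := abs_sub _ _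
        _ = (∑' j : ℕ+, |p n j - u j|) + ∑' j : ℕ+, |q n j - u j * v j| :=
            Summable.tsum_add hpu.abs hqv.abs
    have := hzero.add (tendsto_const_nhds (x := ∑' j : ℕ+, |u j - u j * v j|))
    simpa using this
  -- identification of tvDist with (1/2) * X n
  have htv : ∀ᶠ n in atTop, tvDist Q ρ v i n n = (1/2) * ∑' j : ℕ+, |p n j - q n j| := by
    filter_upwards [hr_pos] with n hrn
    set c : ℕ+ → ℝ := fun j => (rowSum Q n i)⁻¹ - (ρ ^ n)⁻¹ * (v i)⁻¹ * v j with hc_def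
    have hstep1 : ∀ x : Fin n → ℕ+,
        |condPathLaw Q i n x - qPathLaw Q ρ v i x|
          = pathProd Q i x * |c (lastState i x)| := by
      intro x
      have : condPathLaw Q i n x - qPathLaw Q ρ v i x
          = pathProd Q i x * c (lastState i x) := by
        unfold condPathLaw qPathLaw
        rw [Nat.sub_self, rowSum_zero]
        simp only [hc_def]
        field_simp
      rw [this, abs_mul, abs_of_nonneg (pathProd_nonneg hQ_nonneg i x)]
    -- summability and value of ∑' j matpow * |c j|
    have hcsumm : Summable (fun j : ℕ+ => matpow Q n i j * |c j|) := by
      refine Summable.of_nonneg_of_le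
        (fun j => mul_nonneg (hMnn n i j) (abs_nonneg _)) (fun j => ?_)
        (((hMsum n).mul_right (rowSum Q n i)⁻¹).add
          ((hVsum n).summable.mul_right ((ρ ^ n)⁻¹ * (v i)⁻¹)))
      have hcle : |c j| ≤ (rowSum Q n i)⁻¹ + (ρ ^ n)⁻¹ * (v i)⁻¹ * v j := by
        refine (abs_sub _ _).trans ?_
        rw [abs_of_nonneg (inv_nonneg.mpr hrn.le), abs_of_nonneg
          (mul_nonneg (mul_nonneg (inv_nonneg.mpr (hρn n).le) (inv_nonneg.mpr hvi.le))
            (hv_pos j).le)]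
      calc matpow Q n i j * |c j|
          ≤ matpow Q n i j * ((rowSum Q n i)⁻¹ + (ρ ^ n)⁻¹ * (v i)⁻¹ * v j) :=
            mul_le_mul_of_nonneg_left hcle (hMnn n i j)
        _ = matpow Q n i j * (rowSum Q n i)⁻¹
            + matpow Q n i j * v j * ((ρ ^ n)⁻¹ * (v i)⁻¹) := by ring
    -- ENNReal computation
    have hE : ∑' x : Fin n → ℕ+, ENNReal.ofReal (pathProd Q i x * |c (lastState i x)|)
        = ∑' j : ℕ+, ENNReal.ofReal (matpow Q n i j * |c j|) := by
      calc ∑' x : Fin n → ℕ+, ENNReal.ofReal (pathProd Q i x * |c (lastState i x)|)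
          = ∑' x : Fin n → ℕ+, ENNReal.ofReal (pathProd Q i x)
              * ENNReal.ofReal (|c (lastState i x)|) :=
            tsum_congr fun x => ENNReal.ofReal_mul (pathProd_nonneg hQ_nonneg i x)
        _ = ∑' j : ℕ+, eM Q n i j * ENNReal.ofReal (|c j|) :=
            tsum_path hQ_nonneg i n (fun j => ENNReal.ofReal (|c j|))
        _ = ∑' j : ℕ+, ENNReal.ofReal (matpow Q n i j * |c j|) :=
            tsum_congr fun j => by
              rw [eM_eq hQ_nonneg hQ_summ hQ_row n i j, ENNReal.ofReal_mul (hMnn n i j)]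
    have hEfin : (∑' x : Fin n → ℕ+, ENNReal.ofReal (pathProd Q i x * |c (lastState i x)|)) ≠ ⊤ := by
      rw [hE, ← ENNReal.ofReal_tsum_of_nonneg
        (fun j => mul_nonneg (hMnn n i j) (abs_nonneg _)) hcsumm]
      exact ENNReal.ofReal_ne_top
    have hpath_summ : Summable (fun x : Fin n → ℕ+ => pathProd Q i x * |c (lastState i x)|) := by
      have h := ENNReal.summable_toReal hEfin
      exact h.congr fun x => ENNReal.toReal_ofReal
        (mul_nonneg (pathProd_nonneg hQ_nonneg i x) (abs_nonneg _))
    have htsum_eq : ∑' x : Fin n → ℕ+, pathProd Q i x * |c (lastState i x)|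
        = ∑' j : ℕ+, matpow Q n i j * |c j| := by
      have h1 : ENNReal.ofReal (∑' x : Fin n → ℕ+, pathProd Q i x * |c (lastState i x)|)
          = ENNReal.ofReal (∑' j : ℕ+, matpow Q n i j * |c j|) := by
        rw [ENNReal.ofReal_tsum_of_nonneg
          (fun x => mul_nonneg (pathProd_nonneg hQ_nonneg i x) (abs_nonneg _)) hpath_summ, hE,
          ← ENNReal.ofReal_tsum_of_nonneg
          (fun j => mul_nonneg (hMnn n i j) (abs_nonneg _)) hcsumm]
      exact (ENNReal.ofReal_eq_ofReal_iff
        (tsum_nonneg fun x => mul_nonneg (pathProd_nonneg hQ_nonneg i x) (abs_nonneg _))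
        (tsum_nonneg fun j => mul_nonneg (hMnn n i j) (abs_nonneg _))).mp h1
    have hfinal : ∀ j : ℕ+, matpow Q n i j * |c j| = |p n j - q n j| := by
      intro j
      rw [← abs_of_nonneg (hMnn n i j), ← abs_mul]
      congr 1
      simp only [hp_def, hq_def, hc_def, div_eq_mul_inv, mul_inv]
      ring
    unfold tvDist
    rw [tsum_congr hstep1, htsum_eq, tsum_congr hfinal]
  -- conclusion
  have hXfin : Tendsto (fun n => (1/2 : ℝ) * ∑' j : ℕ+, |p n j - q n j|) atTop
      (𝓝 ((1/2) * ∑' j : ℕ+, |u j - u j * v j|)) := hX.const_mul _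
  rw [hD_eq]
  exact Tendsto.congr' (htv.mono fun n h => h.symm) hXfin
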